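/- The maps σ and φ satisfy the additional condition of the braided quantum group definition: (σ ⊗ id ⊗ id)(id ⊗ φ ⊗ id)(σ⁻¹ ⊗ id)(id ⊗ φ) = (id ⊗ id ⊗ σ)(id ⊗ φ ⊗ id)(id ⊗ σ⁻¹)(φ ⊗ id), as k-linear maps U ⊗_k U → U ⊗_k U ⊗_k U ⊗_k U. -/

import Mathlib

open scoped TensorProduct

/-- The Cartan matrix of type `A_n`. -/
def cartanA (n : ℕ) (i j : Fin n) : ℤ :=
  if i = j then 2
  else if (i : ℕ) + 1 = (j : ℕ) ∨ (j : ℕ) + 1 = (i : ℕ) then -1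
  else 0

/-- For `α, γ ∈ ℕⁿ`, `c(α,γ) = ∑_{i,j} a_{ij} α_i γ_j` with `A` the Cartan matrix
of type `A_n`. -/
def cpair {n : ℕ} (α γ : Fin n → ℕ) : ℤ :=
  ∑ i : Fin n, ∑ j : Fin n, cartanA n i j * (α i : ℤ) * (γ j : ℤ)

/-- The quantum Serre relations of type `A_n` hold for the family `y`. -/
def serreCond (k : Type) [CommRing k] (q : kˣ) {n : ℕ} {B : Type} [Ring B] [Algebra k B]
    (y : Fin n → B) : Prop :=
  (∀ i j : Fin n, 1 < |((i : ℕ) : ℤ) - ((j : ℕ) : ℤ)| → y i * y j = y j * y i) ∧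
  (∀ i j : Fin n, |((i : ℕ) : ℤ) - ((j : ℕ) : ℤ)| = 1 →
    y i ^ 2 * y j - ((q : k) + ((q⁻¹ : kˣ) : k)) • (y i * y j * y i) + y j * y i ^ 2 = 0)

/-- `U`, with distinguished generators `x`, is a presentation of `U_q^+(sl_{n+1})`:
the quotient of the free associative unital `k`-algebra on `x_1, …, x_n` by the
two-sided ideal generated by the quantum Serre relations.  This is expressed by:
the relations hold in `U`, the `x i` generate `U`, and `U` has the corresponding
universal (lifting) property. -/
def IsUqPlus (k : Type) [CommRing k] (q : kˣ) {n : ℕ} (U : Type) [Ring U] [Algebra k U]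
    (x : Fin n → U) : Prop :=
  serreCond k q x ∧ Algebra.adjoin k (Set.range x) = ⊤ ∧
    ∀ (B : Type) [Ring B] [Algebra k B] (y : Fin n → B),
      serreCond k q y → ∃ f : U →ₐ[k] B, ∀ i, f (x i) = y i

/-- The map `s ⊗ id` acting on the first two factors of `V ⊗ (V ⊗ V)`. -/
noncomputable def map12 (k V : Type) [CommRing k] [AddCommGroup V] [Module k V]
    (s : V ⊗[k] V →ₗ[k] V ⊗[k] V) :
    V ⊗[k] (V ⊗[k] V) →ₗ[k] V ⊗[k] (V ⊗[k] V) :=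
  (TensorProduct.assoc k V V V).toLinearMap ∘ₗ (TensorProduct.map s LinearMap.id) ∘ₗ
    (TensorProduct.assoc k V V V).symm.toLinearMap

/-- The map `f ⊗ id : V ⊗ V → V ⊗ V ⊗ V` (right-nested), for `f : V → V ⊗ V`. -/
noncomputable def mapFst (k V : Type) [CommRing k] [AddCommGroup V] [Module k V]
    (f : V →ₗ[k] V ⊗[k] V) :
    V ⊗[k] V →ₗ[k] V ⊗[k] (V ⊗[k] V) :=
  (TensorProduct.assoc k V V V).toLinearMap ∘ₗ TensorProduct.map f LinearMap.id

/-- The map `s ⊗ id ⊗ id` acting on the first two factors of `V ⊗ (V ⊗ (V ⊗ V))`. -/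
noncomputable def map12of4 (k V : Type) [CommRing k] [AddCommGroup V] [Module k V]
    (s : V ⊗[k] V →ₗ[k] V ⊗[k] V) :
    V ⊗[k] (V ⊗[k] (V ⊗[k] V)) →ₗ[k] V ⊗[k] (V ⊗[k] (V ⊗[k] V)) :=
  (TensorProduct.assoc k V V (V ⊗[k] V)).toLinearMap ∘ₗ (TensorProduct.map s LinearMap.id) ∘ₗ
    (TensorProduct.assoc k V V (V ⊗[k] V)).symm.toLinearMap

lemma cpair_add_right {n : ℕ} (α γ γ' : Fin n → ℕ) :
    cpair α (γ + γ') = cpair α γ + cpair α γ' := by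
  unfold cpair
  rw [← Finset.sum_add_distrib]
  refine Finset.sum_congr rfl fun i _ => ?_
  rw [← Finset.sum_add_distrib]
  refine Finset.sum_congr rfl fun j _ => ?_
  rw [Pi.add_apply]
  push_cast
  ring

lemma cpair_add_left {n : ℕ} (α α' γ : Fin n → ℕ) :
    cpair (α + α') γ = cpair α γ + cpair α' γ := by
  unfold cpair
  rw [← Finset.sum_add_distrib]
  refine Finset.sum_congr rfl fun i _ => ?_
  rw [← Finset.sum_add_distrib]
  refine Finset.sum_congr rfl fun j _ => ?_
  rw [Pi.add_apply]
  push_cast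
  ring

/-- The span of bihomogeneous tensors of total degree `δ`. -/
def BB (k : Type) [CommRing k] {U : Type} [Ring U] [Algebra k U] {n : ℕ}
    (𝒜 : (Fin n → ℕ) → Submodule k U) (δ : Fin n → ℕ) : Submodule k (U ⊗[k] U) :=
  Submodule.span k
    {z | ∃ (β γ : Fin n → ℕ) (u v : U), β + γ = δ ∧ u ∈ 𝒜 β ∧ v ∈ 𝒜 γ ∧ z = u ⊗ₜ[k] v}

/-- The common value of the two sides: `a₁ ⊗ a₂ ⊗ b₁ ⊗ b₂ ↦ a₁ ⊗ σ⁻¹(a₂ ⊗ b₁) ⊗ b₂`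
(suitably reassociated). -/
noncomputable def Emap (k U : Type) [CommRing k] [AddCommGroup U] [Module k U]
    (σinv : U ⊗[k] U →ₗ[k] U ⊗[k] U) :
    (U ⊗[k] U) ⊗[k] (U ⊗[k] U) →ₗ[k] U ⊗[k] (U ⊗[k] (U ⊗[k] U)) :=
  LinearMap.lTensor U (TensorProduct.assoc k U U U).toLinearMap ∘ₗ
  LinearMap.lTensor U (TensorProduct.map σinv LinearMap.id) ∘ₗ
  LinearMap.lTensor U (TensorProduct.assoc k U U U).symm.toLinearMap ∘ₗ
  (TensorProduct.assoc k U U (U ⊗[k] U)).toLinearMap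

lemma Emap_tmul (k U : Type) [CommRing k] [AddCommGroup U] [Module k U]
    (σinv : U ⊗[k] U →ₗ[k] U ⊗[k] U) (a₁ a₂ b₁ b₂ : U) :
    Emap k U σinv ((a₁ ⊗ₜ[k] a₂) ⊗ₜ[k] (b₁ ⊗ₜ[k] b₂)) =
      a₁ ⊗ₜ[k] ((TensorProduct.assoc k U U U) (σinv (a₂ ⊗ₜ[k] b₁) ⊗ₜ[k] b₂)) := by
  simp [Emap, TensorProduct.assoc_tmul, TensorProduct.assoc_symm_tmul]

lemma map12_tmul (k V : Type) [CommRing k] [AddCommGroup V] [Module k V]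
    (s : V ⊗[k] V →ₗ[k] V ⊗[k] V) (p r t : V) :
    map12 k V s (p ⊗ₜ[k] (r ⊗ₜ[k] t)) =
      (TensorProduct.assoc k V V V) (s (p ⊗ₜ[k] r) ⊗ₜ[k] t) := by
  simp [map12, TensorProduct.assoc_symm_tmul]

lemma mapFst_tmul (k V : Type) [CommRing k] [AddCommGroup V] [Module k V]
    (f : V →ₗ[k] V ⊗[k] V) (a b : V) :
    mapFst k V f (a ⊗ₜ[k] b) = (TensorProduct.assoc k V V V) (f a ⊗ₜ[k] b) := by
  simp [mapFst]

lemma map12of4_tmul (k V : Type) [CommRing k] [AddCommGroup V] [Module k V]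
    (s : V ⊗[k] V →ₗ[k] V ⊗[k] V) (p r : V) (w : V ⊗[k] V) :
    map12of4 k V s (p ⊗ₜ[k] (r ⊗ₜ[k] w)) =
      (TensorProduct.assoc k V V (V ⊗[k] V)) (s (p ⊗ₜ[k] r) ⊗ₜ[k] w) := by
  simp [map12of4, TensorProduct.assoc_symm_tmul]

set_option maxHeartbeats 1000000 in
/-- `σ` and `φ` satisfy the additional condition in the definition of a
braided quantum group:
`(σ ⊗ id ⊗ id)(id ⊗ φ ⊗ id)(σ⁻¹ ⊗ id)(id ⊗ φ) = (id ⊗ id ⊗ σ)(id ⊗ φ ⊗ id)(id ⊗ σ⁻¹)(φ ⊗ id)`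
as `k`-linear maps `U ⊗ U → U ⊗ U ⊗ U ⊗ U`. -/
theorem stmt6 (k U : Type) [CommRing k] (q : kˣ) (n : ℕ) (hn : 1 ≤ n)
    [Ring U] [Algebra k U] (x : Fin n → U) (hU : IsUqPlus k q U x)
    (𝒜 : (Fin n → ℕ) → Submodule k U) [GradedAlgebra 𝒜]
    (hx𝒜 : ∀ i : Fin n, x i ∈ 𝒜 (Pi.single i 1))
    (σ σinv : U ⊗[k] U →ₗ[k] U ⊗[k] U)
    (hσ : ∀ (α γ : Fin n → ℕ) (a b : U), a ∈ 𝒜 α → b ∈ 𝒜 γ →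
      σ (a ⊗ₜ[k] b) = ((q ^ cpair α γ : kˣ) : k) • (b ⊗ₜ[k] a))
    (hσinv : ∀ (α γ : Fin n → ℕ) (a b : U), a ∈ 𝒜 α → b ∈ 𝒜 γ →
      σinv (b ⊗ₜ[k] a) = ((q ^ (-cpair α γ) : kˣ) : k) • (a ⊗ₜ[k] b))
    (hinv₁ : σinv ∘ₗ σ = LinearMap.id) (hinv₂ : σ ∘ₗ σinv = LinearMap.id)
    (μ : U ⊗[k] U →ₗ[k] U ⊗[k] U →ₗ[k] U ⊗[k] U)
    (hμ : ∀ (α γ : Fin n → ℕ) (b c : U), b ∈ 𝒜 α → c ∈ 𝒜 γ → ∀ a d : U,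
      μ (a ⊗ₜ[k] b) (c ⊗ₜ[k] d) = ((q ^ cpair α γ : kˣ) : k) • ((a * c) ⊗ₜ[k] (b * d)))
    (φ : U →ₗ[k] U ⊗[k] U)
    (hφ1 : φ 1 = (1 : U) ⊗ₜ[k] (1 : U))
    (hφm : ∀ a b : U, φ (a * b) = μ (φ a) (φ b))
    (hφx : ∀ i : Fin n, φ (x i) = x i ⊗ₜ[k] (1 : U) + (1 : U) ⊗ₜ[k] x i) :
    map12of4 k U σ ∘ₗ TensorProduct.map LinearMap.id (mapFst k U φ) ∘ₗ
        map12 k U σinv ∘ₗ TensorProduct.map LinearMap.id φ =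
      TensorProduct.map LinearMap.id (TensorProduct.map LinearMap.id σ) ∘ₗ
        TensorProduct.map LinearMap.id (mapFst k U φ) ∘ₗ
        TensorProduct.map LinearMap.id σinv ∘ₗ mapFst k U φ := by
  classical
  obtain ⟨-, hgen, -⟩ := hU
  -- combining powers of q
  -- `μ` respects the grading `BB`
  have hBmul : ∀ (δ ε : Fin n → ℕ) (u v : U ⊗[k] U),
      u ∈ BB k 𝒜 δ → v ∈ BB k 𝒜 ε → μ u v ∈ BB k 𝒜 (δ + ε) := by
    intro δ ε u v hu hv
    induction hu using Submodule.span_induction with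
    | mem z hz =>
      obtain ⟨β₁, β₂, u1, u2, hsum, hu1, hu2, rfl⟩ := hz
      induction hv using Submodule.span_induction with
      | mem w hw =>
        obtain ⟨γ₁, γ₂, v1, v2, hsum', hv1, hv2, rfl⟩ := hw
        rw [hμ β₂ γ₁ u2 v1 hu2 hv1 u1 v2]
        refine Submodule.smul_mem _ _ (Submodule.subset_span ?_)
        exact ⟨β₁ + γ₁, β₂ + γ₂, u1 * v1, u2 * v2,
          by rw [← hsum, ← hsum', add_add_add_comm],
          SetLike.mul_mem_graded hu1 hv1, SetLike.mul_mem_graded hu2 hv2, rfl⟩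
      | zero => simp
      | add w1 w2 _ _ h1 h2 => simpa [map_add] using Submodule.add_mem _ h1 h2
      | smul r w _ h => simpa [map_smul] using Submodule.smul_mem _ r h
    | zero => simp
    | add u1 u2 _ _ h1 h2 => simpa [map_add, LinearMap.add_apply] using Submodule.add_mem _ h1 h2
    | smul r u _ h => simpa [map_smul, LinearMap.smul_apply] using Submodule.smul_mem _ r h
  -- every element lies in the span of "good" homogeneous elements
  have hS : ∀ u : U, u ∈ Submodule.span k {m : U | ∃ β, m ∈ 𝒜 β ∧ φ m ∈ BB k 𝒜 β} := by
    set S : Set U := {m : U | ∃ β, m ∈ 𝒜 β ∧ φ m ∈ BB k 𝒜 β} with hSdef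
    have h1 : (1 : U) ∈ Submodule.span k S := by
      refine Submodule.subset_span ⟨0, SetLike.one_mem_graded 𝒜, ?_⟩
      rw [hφ1]
      exact Submodule.subset_span ⟨0, 0, 1, 1, by simp, SetLike.one_mem_graded 𝒜,
        SetLike.one_mem_graded 𝒜, rfl⟩
    have hmulS : ∀ u v : U, u ∈ Submodule.span k S → v ∈ Submodule.span k S →
        u * v ∈ Submodule.span k S := by
      intro u v hu hv
      induction hu using Submodule.span_induction with
      | mem m hm =>
        induction hv using Submodule.span_induction with
        | mem m' hm' =>
          obtain ⟨β, hmβ, hφmβ⟩ := hm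
          obtain ⟨γ, hmγ, hφmγ⟩ := hm'
          refine Submodule.subset_span ⟨β + γ, SetLike.mul_mem_graded hmβ hmγ, ?_⟩
          rw [hφm]
          exact hBmul β γ _ _ hφmβ hφmγ
        | zero => simpa using Submodule.zero_mem _
        | add w1 w2 _ _ h1 h2 => simpa [mul_add] using Submodule.add_mem _ h1 h2
        | smul r w _ h => simpa [mul_smul_comm] using Submodule.smul_mem _ r h
      | zero => simpa using Submodule.zero_mem _
      | add u1 u2 _ _ h1 h2 => simpa [add_mul] using Submodule.add_mem _ h1 h2
      | smul r u' _ h => simpa [smul_mul_assoc] using Submodule.smul_mem _ r h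
    intro u
    have hle : Algebra.adjoin k (Set.range x) ≤
        (Submodule.span k S).toSubalgebra h1 hmulS := by
      refine Algebra.adjoin_le ?_
      rintro _ ⟨i, rfl⟩
      refine Submodule.subset_span ⟨Pi.single i 1, hx𝒜 i, ?_⟩
      rw [hφx i]
      refine Submodule.add_mem _ (Submodule.subset_span ?_) (Submodule.subset_span ?_)
      · exact ⟨Pi.single i 1, 0, x i, 1, by simp, hx𝒜 i, SetLike.one_mem_graded 𝒜, rfl⟩
      · exact ⟨0, Pi.single i 1, 1, x i, by simp, SetLike.one_mem_graded 𝒜, hx𝒜 i, rfl⟩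
    have : u ∈ Algebra.adjoin k (Set.range x) := by rw [hgen]; trivial
    exact hle this
  -- φ is graded
  have hφgr : ∀ (α : Fin n → ℕ) (a : U), a ∈ 𝒜 α → φ a ∈ BB k 𝒜 α := by
    intro α a ha
    have h2 : Submodule.span k {m : U | ∃ β, m ∈ 𝒜 β ∧ φ m ∈ BB k 𝒜 β} ≤
        Submodule.comap (φ ∘ₗ GradedAlgebra.proj 𝒜 α) (BB k 𝒜 α) := by
      rw [Submodule.span_le]
      rintro m ⟨β, hm, hφm'⟩
      simp only [Set.mem_setOf_eq, SetLike.mem_coe, Submodule.mem_comap, LinearMap.comp_apply,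
        GradedAlgebra.proj_apply]
      by_cases hβ : β = α
      · subst hβ
        rw [DirectSum.decompose_of_mem_same 𝒜 hm]
        exact hφm'
      · rw [DirectSum.decompose_of_mem_ne 𝒜 hm hβ, map_zero]
        exact Submodule.zero_mem _
    have h3 := h2 (hS a)
    simpa [GradedAlgebra.proj_apply, DirectSum.decompose_of_mem_same 𝒜 ha] using h3
  -- LHS on a homogeneous pure tensor
  have hL : ∀ (α β : Fin n → ℕ) (a b : U), a ∈ 𝒜 α → b ∈ 𝒜 β →
      map12of4 k U σ (TensorProduct.map LinearMap.id (mapFst k U φ)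
        (map12 k U σinv (a ⊗ₜ[k] φ b))) = Emap k U σinv (φ a ⊗ₜ[k] φ b) := by
    intro α β a b ha hb
    refine Submodule.span_induction (p := fun z _ =>
      map12of4 k U σ (TensorProduct.map LinearMap.id (mapFst k U φ)
        (map12 k U σinv (a ⊗ₜ[k] z))) = Emap k U σinv (φ a ⊗ₜ[k] z))
      ?_ ?_ ?_ ?_ (hφgr β b hb)
    · rintro z ⟨β₁, β₂, b₁, b₂, hsumβ, hb₁, hb₂, rfl⟩
      rw [map12_tmul, hσinv β₁ α b₁ a hb₁ ha, ← TensorProduct.smul_tmul']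
      simp only [map_smul, TensorProduct.assoc_tmul, TensorProduct.map_tmul,
        LinearMap.id_coe, id_eq, mapFst_tmul]
      refine Submodule.span_induction (p := fun y _ =>
        ((q ^ (-cpair β₁ α) : kˣ) : k) • map12of4 k U σ
            (b₁ ⊗ₜ[k] (TensorProduct.assoc k U U U) (y ⊗ₜ[k] b₂)) =
          Emap k U σinv (y ⊗ₜ[k] (b₁ ⊗ₜ[k] b₂)))
        ?_ ?_ ?_ ?_ (hφgr α a ha)
      · rintro y ⟨α₁, α₂, a₁, a₂, hsumα, ha₁, ha₂, rfl⟩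
        rw [TensorProduct.assoc_tmul, map12of4_tmul, hσ β₁ α₁ b₁ a₁ hb₁ ha₁,
          ← TensorProduct.smul_tmul', Emap_tmul, hσinv β₁ α₂ b₁ a₂ hb₁ ha₂,
          ← TensorProduct.smul_tmul']
        simp only [map_smul, TensorProduct.assoc_tmul, TensorProduct.tmul_smul]
        rw [smul_smul, ← Units.val_mul, ← zpow_add]
        rw [show -cpair β₁ α + cpair β₁ α₁ = -cpair β₁ α₂ by
          rw [← hsumα, cpair_add_right]; ring]
      · simp only [TensorProduct.zero_tmul, TensorProduct.tmul_zero, map_zero, smul_zero]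
      · intro y1 y2 hy1 hy2 h1 h2
        simp only [TensorProduct.add_tmul, map_add, TensorProduct.tmul_add, smul_add] at h1 h2 ⊢
        rw [h1, h2]
      · intro r y hy h
        simp only [← TensorProduct.smul_tmul', map_smul, TensorProduct.tmul_smul] at h ⊢
        rw [smul_comm, h]
    · simp only [TensorProduct.zero_tmul, TensorProduct.tmul_zero, map_zero]
    · intro z1 z2 hz1 hz2 h1 h2
      simp only [TensorProduct.tmul_add, map_add] at h1 h2 ⊢
      rw [h1, h2]
    · intro r z hz h
      simp only [TensorProduct.tmul_smul, map_smul] at h ⊢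
      rw [h]
  -- RHS on a homogeneous pure tensor
  have hR : ∀ (α β : Fin n → ℕ) (a b : U), a ∈ 𝒜 α → b ∈ 𝒜 β →
      TensorProduct.map LinearMap.id (TensorProduct.map LinearMap.id σ)
        (TensorProduct.map LinearMap.id (mapFst k U φ)
          (TensorProduct.map LinearMap.id σinv
            ((TensorProduct.assoc k U U U) (φ a ⊗ₜ[k] b)))) =
        Emap k U σinv (φ a ⊗ₜ[k] φ b) := by
    intro α β a b ha hb
    refine Submodule.span_induction (p := fun y _ =>
      TensorProduct.map LinearMap.id (TensorProduct.map LinearMap.id σ)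
        (TensorProduct.map LinearMap.id (mapFst k U φ)
          (TensorProduct.map LinearMap.id σinv
            ((TensorProduct.assoc k U U U) (y ⊗ₜ[k] b)))) =
        Emap k U σinv (y ⊗ₜ[k] φ b))
      ?_ ?_ ?_ ?_ (hφgr α a ha)
    · rintro y ⟨α₁, α₂, a₁, a₂, hsumα, ha₁, ha₂, rfl⟩
      rw [TensorProduct.assoc_tmul, TensorProduct.map_tmul, LinearMap.id_coe, id_eq,
        hσinv β α₂ b a₂ hb ha₂, TensorProduct.tmul_smul]
      simp only [map_smul, TensorProduct.map_tmul, LinearMap.id_coe, id_eq, mapFst_tmul]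
      refine Submodule.span_induction (p := fun z _ =>
        ((q ^ (-cpair β α₂) : kˣ) : k) •
            TensorProduct.map LinearMap.id (TensorProduct.map LinearMap.id σ)
              (a₁ ⊗ₜ[k] (TensorProduct.assoc k U U U) (z ⊗ₜ[k] a₂)) =
          Emap k U σinv ((a₁ ⊗ₜ[k] a₂) ⊗ₜ[k] z))
        ?_ ?_ ?_ ?_ (hφgr β b hb)
      · rintro z ⟨β₁, β₂, b₁, b₂, hsumβ, hb₁, hb₂, rfl⟩
        rw [TensorProduct.assoc_tmul, TensorProduct.map_tmul, LinearMap.id_coe, id_eq,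
          TensorProduct.map_tmul, LinearMap.id_coe, id_eq, hσ β₂ α₂ b₂ a₂ hb₂ ha₂,
          Emap_tmul, hσinv β₁ α₂ b₁ a₂ hb₁ ha₂, ← TensorProduct.smul_tmul']
        simp only [map_smul, TensorProduct.tmul_smul, TensorProduct.assoc_tmul]
        rw [smul_smul, ← Units.val_mul, ← zpow_add]
        rw [show -cpair β α₂ + cpair β₂ α₂ = -cpair β₁ α₂ by
          rw [← hsumβ, cpair_add_left]; ring]
      · simp only [TensorProduct.zero_tmul, TensorProduct.tmul_zero, map_zero, smul_zero]
      · intro z1 z2 hz1 hz2 h1 h2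
        simp only [TensorProduct.add_tmul, map_add, TensorProduct.tmul_add, smul_add] at h1 h2 ⊢
        rw [h1, h2]
      · intro r z hz h
        simp only [← TensorProduct.smul_tmul', map_smul, TensorProduct.tmul_smul] at h ⊢
        rw [smul_comm, h]
    · simp only [TensorProduct.zero_tmul, TensorProduct.tmul_zero, map_zero]
    · intro y1 y2 hy1 hy2 h1 h2
      simp only [TensorProduct.add_tmul, map_add] at h1 h2 ⊢
      rw [h1, h2]
    · intro r y hy h
      simp only [← TensorProduct.smul_tmul', map_smul] at h ⊢
      rw [h]
  -- assemble
  have htop : ∀ u : U, u ∈ ⨆ i, 𝒜 i := by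
    intro u
    rw [(DirectSum.Decomposition.isInternal 𝒜).submodule_iSup_eq_top]
    trivial
  apply LinearMap.ext
  intro w
  simp only [LinearMap.comp_apply]
  induction w using TensorProduct.induction_on with
  | zero => simp
  | add u v hu hv => simp only [map_add, hu, hv]
  | tmul a b =>
    refine Submodule.iSup_induction (motive := fun a' : U =>
        map12of4 k U σ (TensorProduct.map LinearMap.id (mapFst k U φ)
          (map12 k U σinv (TensorProduct.map LinearMap.id φ (a' ⊗ₜ[k] b)))) =
        TensorProduct.map LinearMap.id (TensorProduct.map LinearMap.id σ)
          (TensorProduct.map LinearMap.id (mapFst k U φ)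
            (TensorProduct.map LinearMap.id σinv (mapFst k U φ (a' ⊗ₜ[k] b)))))
      𝒜 (htop a) ?_ ?_ ?_
    · intro α a' ha'
      refine Submodule.iSup_induction (motive := fun b' : U =>
          map12of4 k U σ (TensorProduct.map LinearMap.id (mapFst k U φ)
            (map12 k U σinv (TensorProduct.map LinearMap.id φ (a' ⊗ₜ[k] b')))) =
          TensorProduct.map LinearMap.id (TensorProduct.map LinearMap.id σ)
            (TensorProduct.map LinearMap.id (mapFst k U φ)
              (TensorProduct.map LinearMap.id σinv (mapFst k U φ (a' ⊗ₜ[k] b')))))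
        𝒜 (htop b) ?_ ?_ ?_
      · intro β b' hb'
        rw [TensorProduct.map_tmul, LinearMap.id_coe, id_eq, mapFst_tmul]
        rw [hL α β a' b' ha' hb', hR α β a' b' ha' hb']
      · simp
      · intro y z h1 h2
        simp only [TensorProduct.tmul_add, map_add, h1, h2]
    · simp
    · intro y z h1 h2
      simp only [TensorProduct.add_tmul, map_add, h1, h2]
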